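/- Let (X, d_X) be a finite pseudometric space, and let m^X and m^Y be two irreducible and aperiodic transition kernels on X, with cost C(x,x') = d_X(x,x'). Then for any initial distributions ν^X, ν^Y ∈ 𝒫(X), the limit lim_{k→∞} d_WL^{(k)}((X, m^X, ν^X), (X, m^Y, ν^Y); C) exists and is the same for all choices of ν^X and ν^Y; in particular it equals lim_{k→∞} d_WL^{(k)}((X, m^X, μ^X), (X, m^Y, μ^Y); C) where μ^X, μ^Y are the unique stationary distributions of m^X, m^Y. -/

import Mathlib

open scoped BigOperators
open Filter Topology

/-- A probability vector on a finite type. -/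
def IsProb {X : Type*} [Fintype X] (ν : X → ℝ) : Prop :=
  (∀ x, 0 ≤ ν x) ∧ ∑ x, ν x = 1

/-- `μ` is a coupling of `α` and `β`. -/
def IsCoupling {X Y : Type*} [Fintype X] [Fintype Y]
    (μ : X × Y → ℝ) (α : X → ℝ) (β : Y → ℝ) : Prop :=
  (∀ z, 0 ≤ μ z) ∧ (∀ x, ∑ y, μ (x, y) = α x) ∧ (∀ y, ∑ x, μ (x, y) = β y)

/-- A finite Markov chain: a transition kernel together with an initial distribution. -/
structure MarkovChain (X : Type*) [Fintype X] where
  kernel : X → X → ℝ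
  init : X → ℝ
  kernel_prob : ∀ x, IsProb (kernel x)
  init_prob : IsProb init

/-- A Markovian coupling between two finite Markov chains.  `trans t` is the
transition coupling used from time `t` to time `t+1` (i.e. `m^{(t+1)}`). -/
structure MarkovCoupling {X Y : Type*} [Fintype X] [Fintype Y]
    (MX : MarkovChain X) (MY : MarkovChain Y) where
  init : X × Y → ℝ
  trans : ℕ → X × Y → X × Y → ℝ
  init_coupling : IsCoupling init MX.init MY.init
  trans_coupling : ∀ t xy, IsCoupling (trans t xy) (MX.kernel xy.1) (MY.kernel xy.2)

/-- Time-`t` law determined by an initial distribution and step kernels. -/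
noncomputable def lawAux {X Y : Type*} [Fintype X] [Fintype Y]
    (ν : X × Y → ℝ) (m : ℕ → X × Y → X × Y → ℝ) : ℕ → X × Y → ℝ
  | 0 => ν
  | t + 1 => fun z => ∑ w : X × Y, m t w z * lawAux ν m t w

/-- The time-`t` law of a Markovian coupling. -/
noncomputable def MarkovCoupling.law {X Y : Type*} [Fintype X] [Fintype Y]
    {MX : MarkovChain X} {MY : MarkovChain Y} (π : MarkovCoupling MX MY) :
    ℕ → X × Y → ℝ :=
  lawAux π.init π.trans

/-- `p` is a probability distribution on `ℕ`. -/
def IsProbNat (p : ℕ → ℝ) : Prop := (∀ t, 0 ≤ p t) ∧ HasSum p 1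

/-- The Optimal Transport Markov (OTM) distance associated to `p`. -/
noncomputable def dOTM {X Y : Type*} [Fintype X] [Fintype Y] (p : ℕ → ℝ)
    (MX : MarkovChain X) (MY : MarkovChain Y) (C : X × Y → ℝ) : ℝ :=
  ⨅ π : MarkovCoupling MX MY, ∑' t, p t * ∑ z : X × Y, C z * π.law t z

/-- The Dirac mass at `k` on `ℕ`. -/
noncomputable def diracN (k : ℕ) : ℕ → ℝ := fun t => if t = k then 1 else 0

/-- The depth-`k` WL distance, `d_WL^{(k)} = d_OTM^{δ_k}`. -/
noncomputable def dWL {X Y : Type*} [Fintype X] [Fintype Y] (k : ℕ)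
    (MX : MarkovChain X) (MY : MarkovChain Y) (C : X × Y → ℝ) : ℝ :=
  dOTM (diracN k) MX MY C

/-- `d` is a pseudometric on `X`. -/
def IsPseudometric {X : Type*} (d : X → X → ℝ) : Prop :=
  (∀ x y, 0 ≤ d x y) ∧ (∀ x, d x x = 0) ∧ (∀ x y, d x y = d y x) ∧
  (∀ x y z, d x z ≤ d x y + d y z)

/-- The `t`-step transition kernel. -/
noncomputable def kpow {X : Type*} [Fintype X] [DecidableEq X]
    (m : X → X → ℝ) : ℕ → X → X → ℝ
  | 0 => fun x x' => if x = x' then 1 else 0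
  | t + 1 => fun x x' => ∑ y, m x y * kpow m t y x'

/-- A transition kernel is irreducible if every state can reach every state in
some positive finite number of steps. -/
def KernelIrreducible {X : Type*} [Fintype X] [DecidableEq X] (m : X → X → ℝ) : Prop :=
  ∀ x x', ∃ t, 1 ≤ t ∧ 0 < kpow m t x x'

/-- A transition kernel is aperiodic if for every state the gcd of its return
times is `1` (i.e. every common divisor of the return times is `1`). -/
def KernelAperiodic {X : Type*} [Fintype X] [DecidableEq X] (m : X → X → ℝ) : Prop :=
  ∀ x, ∀ d : ℕ, (∀ t, 1 ≤ t → 0 < kpow m t x x → d ∣ t) → d = 1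

/-- `μ` is stationary for the transition kernel `m`. -/
def IsStationaryFor {X : Type*} [Fintype X] (m : X → X → ℝ) (μ : X → ℝ) : Prop :=
  ∀ x', ∑ x, m x x' * μ x = μ x'

section PartA
variable {X : Type*} [Fintype X] [DecidableEq X]

lemma kpow_nonneg {m : X → X → ℝ} (hm : ∀ x, IsProb (m x)) :
    ∀ t x x', 0 ≤ kpow m t x x'
  | 0, x, x' => by dsimp [kpow]; split <;> norm_num
  | t+1, x, x' => Finset.sum_nonneg fun y _ =>
      mul_nonneg ((hm x).1 y) (kpow_nonneg hm t y x')

lemma kpow_rowsum {m : X → X → ℝ} (hm : ∀ x, IsProb (m x)) :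
    ∀ t x, ∑ x', kpow m t x x' = 1
  | 0, x => by simp [kpow]
  | t+1, x => by
    dsimp [kpow]
    rw [Finset.sum_comm]
    have : ∀ y ∈ Finset.univ, ∑ x' : X, m x y * kpow m t y x' = m x y := by
      intro y _
      rw [← Finset.mul_sum, kpow_rowsum hm t y, mul_one]
    rw [Finset.sum_congr rfl this, (hm x).2]

lemma kpow_add {m : X → X → ℝ} :
    ∀ s t (x z : X), kpow m (s+t) x z = ∑ y, kpow m s x y * kpow m t y z
  | 0, t, x, z => by
    simp only [Nat.zero_add]
    dsimp [kpow]
    simp [ite_mul]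
  | s+1, t, x, z => by
    rw [show s + 1 + t = (s + t) + 1 from by omega]
    dsimp [kpow]
    have : ∀ y ∈ Finset.univ, m x y * kpow m (s+t) y z
        = ∑ a, m x y * (kpow m s y a * kpow m t a z) := by
      intro y _
      rw [kpow_add s t y z, Finset.mul_sum]
    rw [Finset.sum_congr rfl this, Finset.sum_comm]
    refine Finset.sum_congr rfl fun a _ => ?_
    rw [Finset.sum_mul]
    refine Finset.sum_congr rfl fun y _ => by ring

lemma kpow_succ' {m : X → X → ℝ} (s : ℕ) (x z : X) :
    kpow m (s+1) x z = ∑ a, kpow m s x a * m a z := by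
  rw [kpow_add s 1 x z]
  refine Finset.sum_congr rfl fun a _ => ?_
  congr 1
  dsimp [kpow]
  simp

end PartA
section PartB
variable {X : Type*} [Fintype X] [DecidableEq X]

lemma return_times_large {m : X → X → ℝ} (hm : ∀ x, IsProb (m x))
    (hirr : KernelIrreducible m) (haper : KernelAperiodic m) (x : X) :
    ∃ N, ∀ n, N ≤ n → 0 < kpow m n x x := by
  classical
  set S : Set ℕ := {t | 1 ≤ t ∧ 0 < kpow m t x x} with hS
  have hSadd : ∀ a ∈ S, ∀ b ∈ S, a + b ∈ S := by
    rintro a ⟨ha1, hap⟩ b ⟨hb1, hbp⟩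
    refine ⟨by omega, ?_⟩
    rw [kpow_add]
    have hterm : (0:ℝ) < kpow m a x x * kpow m b x x := mul_pos hap hbp
    refine lt_of_lt_of_le hterm ?_
    exact Finset.single_le_sum
      (fun y _ => mul_nonneg (kpow_nonneg hm a x y) (kpow_nonneg hm b y x))
      (Finset.mem_univ x)
  set M := AddSubmonoid.closure S with hM
  have hSM : ∀ t ∈ S, t ∈ M := fun t ht => AddSubmonoid.subset_closure ht
  have hMS : ∀ n ∈ M, n = 0 ∨ n ∈ S := by
    intro n hn
    induction hn using AddSubmonoid.closure_induction with
    | mem t ht => exact Or.inr ht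
    | zero => exact Or.inl rfl
    | add a b ha hb iha ihb =>
      rcases iha with rfl | ha'
      · simpa using ihb
      rcases ihb with rfl | hb'
      · simpa using Or.inr ha'
      · exact Or.inr (hSadd a ha' b hb')
  -- minimal positive difference
  set P : ℕ → Prop := fun g => 0 < g ∧ ∃ a ∈ M, ∃ b ∈ M, a = b + g with hP
  have hPex : ∃ g, P g := by
    obtain ⟨t, ht1, htp⟩ := hirr x x
    exact ⟨t, by omega, t, hSM t ⟨ht1, htp⟩, 0, zero_mem M, (Nat.zero_add t).symm⟩
  haveI : DecidablePred P := Classical.decPred P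
  set g₀ := Nat.find hPex with hg₀
  obtain ⟨hg₀pos, a₀, ha₀M, b₀, hb₀M, hab₀⟩ := Nat.find_spec hPex
  have hdvd : ∀ t, 1 ≤ t → 0 < kpow m t x x → g₀ ∣ t := by
    intro t ht1 htp
    have htS : t ∈ S := ⟨ht1, htp⟩
    set q := t / g₀ with hq
    set r := t % g₀ with hr
    rcases Nat.eq_zero_or_pos r with hr0 | hrpos
    · exact Nat.dvd_of_mod_eq_zero hr0
    · exfalso
      have hdm : g₀ * q + r = t := Nat.div_add_mod t g₀
      have e2 : q * a₀ = q * b₀ + q * g₀ := by rw [hab₀, Nat.mul_add]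
      have hPr : P r := by
        refine ⟨hrpos, t + q * b₀, ?_, q * a₀, ?_, by
          rw [mul_comm q g₀] at e2; omega⟩
        · refine M.add_mem (hSM t htS) ?_
          have := M.nsmul_mem hb₀M q
          rwa [smul_eq_mul] at this
        · have := M.nsmul_mem ha₀M q
          rwa [smul_eq_mul] at this
      exact Nat.find_min hPex (Nat.mod_lt t hg₀pos) hPr
  have hg1 : g₀ = 1 := haper x g₀ hdvd
  have hab₀' : a₀ = b₀ + 1 := by omega
  clear hab₀; rename' hab₀' => hab₀
  -- Schur-type conclusion: all n ≥ b₀*b₀+1 lie in S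
  refine ⟨b₀ * b₀ + 1, fun n hn => ?_⟩
  have hn1 : 1 ≤ n := by omega
  have hnM : n ∈ M := by
    rcases Nat.eq_zero_or_pos b₀ with hb0 | hbpos
    · have ha1 : a₀ = 1 := by omega
      have := M.nsmul_mem ha₀M n
      rwa [ha1, smul_eq_mul, Nat.mul_one] at this
    · set r := n % b₀ with hrdef
      set c := n / b₀ with hcdef
      have hrb : r < b₀ := Nat.mod_lt n hbpos
      have hbc : b₀ ≤ c := (Nat.le_div_iff_mul_le hbpos).2 (by nlinarith)
      have hrc : r ≤ c := by omega
      have hmem := M.add_mem (M.nsmul_mem ha₀M r) (M.nsmul_mem hb₀M (c - r))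
      rw [smul_eq_mul, smul_eq_mul] at hmem
      have h1 : r * a₀ = r * b₀ + r := by rw [hab₀, Nat.mul_add, Nat.mul_one]
      have h2 : (c - r) * b₀ = c * b₀ - r * b₀ := Nat.sub_mul c r b₀
      have h3 : r * b₀ ≤ c * b₀ := Nat.mul_le_mul_right b₀ hrc
      have h4 : b₀ * c + r = n := Nat.div_add_mod n b₀
      have : r * a₀ + (c - r) * b₀ = n := by
        rw [h1, h2, mul_comm b₀ c] at *
        omega
      rwa [this] at hmem
  rcases hMS n hnM with rfl | hnS
  · omega
  · exact hnS.2

lemma exists_uniform_pos {m : X → X → ℝ} [Nonempty X] (hm : ∀ x, IsProb (m x))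
    (hirr : KernelIrreducible m) (haper : KernelAperiodic m) :
    ∃ s, 1 ≤ s ∧ ∀ x x', 0 < kpow m s x x' := by
  classical
  have hret := fun x => return_times_large hm hirr haper x
  choose N hN using hret
  choose T hT1 hTpos using hirr
  set N0 := Finset.univ.sup N with hN0
  set T0 := Finset.univ.sup (fun x => Finset.univ.sup (T x)) with hT0
  refine ⟨N0 + T0 + 1, by omega, fun x x' => ?_⟩
  have htle : T x x' ≤ T0 := by
    calc T x x' ≤ Finset.univ.sup (T x) := Finset.le_sup (Finset.mem_univ x')
    _ ≤ T0 := Finset.le_sup (f := fun x => Finset.univ.sup (T x)) (Finset.mem_univ x)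
  have hNle : N x ≤ N0 := Finset.le_sup (Finset.mem_univ x)
  have h1 : 1 ≤ T x x' := hT1 x x'
  rw [show N0 + T0 + 1 = (N0 + T0 + 1 - T x x') + T x x' from by omega, kpow_add]
  have hterm : (0:ℝ) < kpow m (N0 + T0 + 1 - T x x') x x * kpow m (T x x') x x' :=
    mul_pos (hN x _ (by omega)) (hTpos x x')
  refine lt_of_lt_of_le hterm ?_
  exact Finset.single_le_sum
    (fun y _ => mul_nonneg (kpow_nonneg hm _ x y) (kpow_nonneg hm _ y x'))
    (Finset.mem_univ x)

lemma kpow_pos_mono {m : X → X → ℝ} (hm : ∀ x, IsProb (m x)) {s s' : ℕ} (hss : s ≤ s')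
    (hpos : ∀ x x', 0 < kpow m s x x') : ∀ x x', 0 < kpow m s' x x' := by
  induction s' , hss using Nat.le_induction with
  | base => exact hpos
  | succ n hn ih =>
    intro x x'
    obtain ⟨y0, hy0⟩ : ∃ y, 0 < m x y := by
      by_contra h
      push_neg at h
      have hz : ∀ y, m x y = 0 := fun y => le_antisymm (h y) ((hm x).1 y)
      have hs := (hm x).2
      rw [Finset.sum_congr rfl (fun y _ => hz y)] at hs
      simp at hs
    dsimp [kpow]
    have hterm : (0:ℝ) < m x y0 * kpow m n y0 x' := mul_pos hy0 (ih y0 x')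
    refine lt_of_lt_of_le hterm ?_
    exact Finset.single_le_sum
      (fun y _ => mul_nonneg ((hm x).1 y) (le_of_lt (ih y x')))
      (Finset.mem_univ y0)

end PartB
section PartC
set_option linter.unusedSectionVars false
variable {X : Type*} [Fintype X] [DecidableEq X]

/-- validity of a family of transition couplings -/
def ValidT (mX mY : X → X → ℝ) (τ : ℕ → X × X → X × X → ℝ) : Prop :=
  ∀ t xy, IsCoupling (τ t xy) (mX xy.1) (mY xy.2)

/-- the independent (product) transition coupling -/
noncomputable def prodT (mX mY : X → X → ℝ) : ℕ → X × X → X × X → ℝ :=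
  fun _ xy z => mX xy.1 z.1 * mY xy.2 z.2

lemma prod_coupling {p q : X → ℝ} (hp : IsProb p) (hq : IsProb q) :
    IsCoupling (fun z : X × X => p z.1 * q z.2) p q := by
  refine ⟨fun z => mul_nonneg (hp.1 z.1) (hq.1 z.2), fun x => ?_, fun y => ?_⟩
  · dsimp only; rw [← Finset.mul_sum, hq.2, mul_one]
  · dsimp only; rw [← Finset.sum_mul, hp.2, one_mul]

lemma validT_prodT {mX mY : X → X → ℝ} (hmX : ∀ x, IsProb (mX x)) (hmY : ∀ x, IsProb (mY x)) :
    ValidT mX mY (prodT mX mY) :=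
  fun _ xy => prod_coupling (hmX xy.1) (hmY xy.2)

lemma validT_nonneg {mX mY : X → X → ℝ} {τ} (hτ : ValidT mX mY τ) :
    ∀ t xy z, 0 ≤ τ t xy z := fun t xy z => (hτ t xy).1 z

lemma coupling_total {Z : Type*} [Fintype Z] {μ : Z × Z → ℝ} {α β : Z → ℝ}
    (h : IsCoupling μ α β) (hα : ∑ z, α z = 1) : ∑ z, μ z = 1 := by
  rw [Fintype.sum_prod_type]
  rw [Finset.sum_congr rfl (fun x _ => h.2.1 x), hα]

lemma validT_total {mX mY : X → X → ℝ} {τ} (hmX : ∀ x, IsProb (mX x))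
    (hτ : ValidT mX mY τ) : ∀ t xy, ∑ z, τ t xy z = 1 :=
  fun t xy => coupling_total (hτ t xy) (hmX xy.1).2

lemma lawAux_nonneg {w : X × X → ℝ} {τ} (h0 : ∀ z, 0 ≤ w z)
    (hτ : ∀ t xy z, 0 ≤ τ t xy z) : ∀ t z, 0 ≤ lawAux w τ t z
  | 0, z => h0 z
  | t+1, z => Finset.sum_nonneg fun xy _ =>
      mul_nonneg (hτ t xy z) (lawAux_nonneg h0 hτ t xy)

lemma lawAux_total {w : X × X → ℝ} {τ} (hτ : ∀ t xy, ∑ z, τ t xy z = 1) :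
    ∀ t, ∑ z, lawAux w τ t z = ∑ z, w z
  | 0 => rfl
  | t+1 => by
    dsimp [lawAux]
    rw [Finset.sum_comm]
    have : ∀ xy ∈ Finset.univ, ∑ z : X × X, τ t xy z * lawAux w τ t xy
        = lawAux w τ t xy := by
      intro xy _
      rw [← Finset.sum_mul, hτ t xy, one_mul]
    rw [Finset.sum_congr rfl this, lawAux_total hτ t]

/-- push a distribution one step through a kernel -/
noncomputable def stepD (m : X → X → ℝ) (p : X → ℝ) : X → ℝ :=
  fun x' => ∑ x, m x x' * p x

lemma stepD_prob {m : X → X → ℝ} (hm : ∀ x, IsProb (m x)) {p : X → ℝ} (hp : IsProb p) :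
    IsProb (stepD m p) := by
  constructor
  · intro x'
    exact Finset.sum_nonneg fun x _ => mul_nonneg ((hm x).1 x') (hp.1 x)
  · dsimp [stepD]
    rw [Finset.sum_comm]
    have : ∀ x ∈ Finset.univ, ∑ x' : X, m x x' * p x = p x := by
      intro x _
      rw [← Finset.sum_mul, (hm x).2, one_mul]
    rw [Finset.sum_congr rfl this, hp.2]

lemma stepD_iter_prob {m : X → X → ℝ} (hm : ∀ x, IsProb (m x)) {p : X → ℝ} (hp : IsProb p) :
    ∀ t, IsProb ((stepD m)^[t] p)
  | 0 => hp
  | t+1 => by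
    rw [Function.iterate_succ_apply']
    exact stepD_prob hm (stepD_iter_prob hm hp t)

lemma lawAux_margX {mX mY : X → X → ℝ} {w : X × X → ℝ} {τ} (hτ : ValidT mX mY τ) :
    ∀ t, (fun x => ∑ y, lawAux w τ t (x, y)) = (stepD mX)^[t] (fun x => ∑ y, w (x, y))
  | 0 => rfl
  | t+1 => by
    rw [Function.iterate_succ_apply', ← lawAux_margX hτ t]
    funext x'
    dsimp [lawAux, stepD]
    rw [Finset.sum_comm]
    have h1 : ∀ xy ∈ Finset.univ, ∑ y : X, τ t xy (x', y) * lawAux w τ t xy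
        = mX xy.1 x' * lawAux w τ t xy := by
      intro xy _
      rw [← Finset.sum_mul, (hτ t xy).2.1 x']
    rw [Finset.sum_congr rfl h1, Fintype.sum_prod_type]
    refine Finset.sum_congr rfl fun a _ => ?_
    rw [Finset.mul_sum]

lemma lawAux_margY {mX mY : X → X → ℝ} {w : X × X → ℝ} {τ} (hτ : ValidT mX mY τ) :
    ∀ t, (fun y => ∑ x, lawAux w τ t (x, y)) = (stepD mY)^[t] (fun y => ∑ x, w (x, y))
  | 0 => rfl
  | t+1 => by
    rw [Function.iterate_succ_apply', ← lawAux_margY hτ t]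
    funext y'
    dsimp [lawAux, stepD]
    rw [Finset.sum_comm]
    have h1 : ∀ xy ∈ Finset.univ, ∑ x : X, τ t xy (x, y') * lawAux w τ t xy
        = mY xy.2 y' * lawAux w τ t xy := by
      intro xy _
      rw [← Finset.sum_mul, (hτ t xy).2.2 y']
    rw [Finset.sum_congr rfl h1]
    rw [show ∑ xy : X × X, mY xy.2 y' * lawAux w τ t xy
        = ∑ y : X, ∑ x : X, mY y y' * lawAux w τ t (x, y) from by
      rw [Fintype.sum_prod_type, Finset.sum_comm]]
    refine Finset.sum_congr rfl fun b _ => ?_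
    rw [Finset.mul_sum]

lemma lawAux_shift {w : X × X → ℝ} {τ} (t : ℕ) :
    ∀ d, lawAux w τ (t + d) = lawAux (lawAux w τ t) (fun s => τ (t + s)) d
  | 0 => rfl
  | d+1 => by
    show lawAux w τ ((t + d) + 1) = _
    dsimp [lawAux]
    rw [lawAux_shift t d]

lemma lawAux_congr {w : X × X → ℝ} {τ τ' : ℕ → X × X → X × X → ℝ} :
    ∀ t, (∀ s, s < t → τ s = τ' s) → lawAux w τ t = lawAux w τ' t
  | 0, _ => rfl
  | t+1, h => by
    dsimp [lawAux]
    rw [lawAux_congr t (fun s hs => h s (by omega)), h t (by omega)]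

lemma lawAux_prod_formula {mX mY : X → X → ℝ} {w : X × X → ℝ} :
    ∀ s, lawAux w (prodT mX mY) s
      = fun z => ∑ xy : X × X, kpow mX s xy.1 z.1 * kpow mY s xy.2 z.2 * w xy
  | 0 => by
    funext z
    dsimp [lawAux, kpow]
    rw [Fintype.sum_prod_type]
    simp [ite_mul, one_mul, zero_mul, Finset.sum_ite_eq, Finset.sum_ite_eq']
  | s+1 => by
    funext z
    dsimp [lawAux]
    simp only [lawAux_prod_formula (mX := mX) (mY := mY) (w := w) s]
    rw [Finset.sum_congr rfl fun ab (_ : ab ∈ Finset.univ) => Finset.mul_sum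
      Finset.univ (fun xy => kpow mX s xy.1 ab.1 * kpow mY s xy.2 ab.2 * w xy)
      (prodT mX mY s ab z)]
    rw [Finset.sum_comm]
    refine Finset.sum_congr rfl fun xy _ => ?_
    rw [kpow_succ' (m := mX), kpow_succ' (m := mY), Finset.sum_mul_sum, Finset.sum_mul]
    rw [Fintype.sum_prod_type]
    refine Finset.sum_congr rfl fun a _ => ?_
    rw [Finset.sum_mul]
    refine Finset.sum_congr rfl fun b _ => ?_
    dsimp [prodT]; ring

end PartC
section PartD
set_option linter.unusedSectionVars false
variable {X : Type*} [Fintype X] [DecidableEq X]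

noncomputable def mkMC {MX MY : MarkovChain X}
    (w : X × X → ℝ) (τ : ℕ → X × X → X × X → ℝ)
    (hw : IsCoupling w MX.init MY.init) (hτ : ValidT MX.kernel MY.kernel τ) :
    MarkovCoupling MX MY := ⟨w, τ, hw, hτ⟩

instance MCnonempty (MX MY : MarkovChain X) : Nonempty (MarkovCoupling MX MY) :=
  ⟨mkMC (fun z => MX.init z.1 * MY.init z.2) (prodT MX.kernel MY.kernel)
    (prod_coupling MX.init_prob MY.init_prob)
    (validT_prodT MX.kernel_prob MY.kernel_prob)⟩

lemma law_eq (MX MY : MarkovChain X) (π : MarkovCoupling MX MY) :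
    π.law = lawAux π.init π.trans := rfl

lemma dWL_eq_iInf (k : ℕ) (MX MY : MarkovChain X) (C : X × X → ℝ) :
    dWL k MX MY C = ⨅ π : MarkovCoupling MX MY, ∑ z, C z * π.law k z := by
  unfold dWL dOTM
  refine iInf_congr fun π => ?_
  rw [tsum_eq_single k (fun t ht => by simp [diracN, ht])]
  simp [diracN]

lemma cost_nonneg {MX MY : MarkovChain X} {C : X × X → ℝ} (hC : ∀ z, 0 ≤ C z)
    (k : ℕ) (π : MarkovCoupling MX MY) : 0 ≤ ∑ z, C z * π.law k z :=
  Finset.sum_nonneg fun z _ => mul_nonneg (hC z)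
    (lawAux_nonneg π.init_coupling.1 (validT_nonneg π.trans_coupling) k z)

lemma cost_le_D {MX MY : MarkovChain X} {C : X × X → ℝ} (hC : ∀ z, 0 ≤ C z)
    (k : ℕ) (π : MarkovCoupling MX MY) :
    ∑ z, C z * π.law k z ≤ ∑ z, C z := by
  have hlaw0 := lawAux_nonneg π.init_coupling.1 (validT_nonneg π.trans_coupling) (w := π.init)
  have htot : ∑ z, π.law k z = 1 := by
    rw [law_eq, lawAux_total (validT_total MX.kernel_prob π.trans_coupling) k,
      coupling_total π.init_coupling MX.init_prob.2]
  refine Finset.sum_le_sum fun z _ => ?_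
  have hle1 : π.law k z ≤ 1 := by
    rw [← htot]
    exact Finset.single_le_sum (fun z' _ => hlaw0 k z') (Finset.mem_univ z)
  calc C z * π.law k z ≤ C z * 1 := mul_le_mul_of_nonneg_left hle1 (hC z)
  _ = C z := mul_one _

lemma dWL_bddBelow {MX MY : MarkovChain X} {C : X × X → ℝ} (hC : ∀ z, 0 ≤ C z) (k : ℕ) :
    BddBelow (Set.range fun π : MarkovCoupling MX MY => ∑ z, C z * π.law k z) := by
  refine ⟨0, ?_⟩
  rintro r ⟨π, rfl⟩
  exact cost_nonneg hC k π

lemma dWL_nonneg {MX MY : MarkovChain X} {C : X × X → ℝ} (hC : ∀ z, 0 ≤ C z) (k : ℕ) :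
    0 ≤ dWL k MX MY C := by
  rw [dWL_eq_iInf]
  exact le_ciInf (cost_nonneg hC k)

lemma dWL_le_D {MX MY : MarkovChain X} {C : X × X → ℝ} (hC : ∀ z, 0 ≤ C z) (k : ℕ) :
    dWL k MX MY C ≤ ∑ z, C z := by
  rw [dWL_eq_iInf]
  exact le_trans (ciInf_le (dWL_bddBelow hC k) (Classical.arbitrary _))
    (cost_le_D hC k _)

lemma dWL_restriction {mX mY : X → X → ℝ} (hmX : ∀ x, IsProb (mX x)) (hmY : ∀ x, IsProb (mY x))
    {C : X × X → ℝ} (hC : ∀ z, 0 ≤ C z)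
    {p q p' q' : X → ℝ} (hp : IsProb p) (hq : IsProb q) (hp' : IsProb p') (hq' : IsProb q')
    (t d : ℕ) (hEp : p' = (stepD mX)^[t] p) (hEq : q' = (stepD mY)^[t] q) :
    dWL d (⟨mX, p', hmX, hp'⟩ : MarkovChain X) (⟨mY, q', hmY, hq'⟩ : MarkovChain X) C
      ≤ dWL (t + d) (⟨mX, p, hmX, hp⟩ : MarkovChain X) (⟨mY, q, hmY, hq⟩ : MarkovChain X) C := by
  rw [dWL_eq_iInf, dWL_eq_iInf]
  refine le_ciInf fun π => ?_
  have hmargX : ∀ x, ∑ y, π.law t (x, y) = p' x := by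
    intro x
    have h1 := lawAux_margX (w := π.init) π.trans_coupling t
    have h2 : (fun x => ∑ y, π.init (x, y)) = p := funext π.init_coupling.2.1
    have h1' := congrFun h1 x
    rw [h2] at h1'
    rw [hEp]
    exact h1'
  have hmargY : ∀ y, ∑ x, π.law t (x, y) = q' y := by
    intro y
    have h1 := lawAux_margY (w := π.init) π.trans_coupling t
    have h2 : (fun y => ∑ x, π.init (x, y)) = q := funext π.init_coupling.2.2
    have h1' := congrFun h1 y
    rw [h2] at h1'
    rw [hEq]
    exact h1'
  set π' : MarkovCoupling (⟨mX, p', hmX, hp'⟩ : MarkovChain X) (⟨mY, q', hmY, hq'⟩ : MarkovChain X) :=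
    mkMC (π.law t) (fun s => π.trans (t + s))
      ⟨lawAux_nonneg π.init_coupling.1 (validT_nonneg π.trans_coupling) t, hmargX, hmargY⟩
      (fun s xy => π.trans_coupling (t + s) xy) with hπ'
  have hlaw : π'.law d = π.law (t + d) := by
    rw [law_eq, law_eq, lawAux_shift]
    rfl
  calc ⨅ σ : MarkovCoupling _ _, ∑ z, C z * σ.law d z ≤ ∑ z, C z * π'.law d z :=
        ciInf_le (dWL_bddBelow hC d) π'
  _ = ∑ z, C z * π.law (t + d) z := by rw [hlaw]

end PartD
section PartE
set_option linter.unusedSectionVars false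
variable {X : Type*} [Fintype X] [DecidableEq X]

lemma mix_exists {mX mY : X → X → ℝ} (hmX : ∀ x, IsProb (mX x)) (hmY : ∀ x, IsProb (mY x))
    {lam : ℝ} (hl0 : 0 < lam) (hl1 : lam < 1) (s₀ : ℕ)
    (w u r : X × X → ℝ) (hu0 : ∀ z, 0 ≤ u z) (hr0 : ∀ z, 0 ≤ r z)
    (τu τr : ℕ → X × X → X × X → ℝ) (hτu : ValidT mX mY τu) (hτr : ValidT mX mY τr)
    (hbase : lawAux w (prodT mX mY) s₀ = fun z => lam * u z + (1 - lam) * r z) :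
    ∃ τ, ValidT mX mY τ ∧ ∀ j, lawAux w τ (s₀ + j) =
      fun z => lam * lawAux u τu j z + (1 - lam) * lawAux r τr j z := by
  classical
  set Lu := lawAux u τu with hLu
  set Lr := lawAux r τr with hLr
  have hLu0 : ∀ j z, 0 ≤ Lu j z := lawAux_nonneg hu0 (validT_nonneg hτu)
  have hLr0 : ∀ j z, 0 ≤ Lr j z := lawAux_nonneg hr0 (validT_nonneg hτr)
  set τ : ℕ → X × X → X × X → ℝ := fun t xy =>
    if t < s₀ then prodT mX mY t xy else
      if lam * Lu (t - s₀) xy + (1 - lam) * Lr (t - s₀) xy = 0 then prodT mX mY t xy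
      else fun z => (lam * Lu (t - s₀) xy * τu (t - s₀) xy z
        + (1 - lam) * Lr (t - s₀) xy * τr (t - s₀) xy z)
        / (lam * Lu (t - s₀) xy + (1 - lam) * Lr (t - s₀) xy) with hτdef
  have hden_nonneg : ∀ j xy, 0 ≤ lam * Lu j xy + (1 - lam) * Lr j xy := fun j xy =>
    add_nonneg (mul_nonneg hl0.le (hLu0 j xy))
      (mul_nonneg (by linarith) (hLr0 j xy))
  have hτvalid : ValidT mX mY τ := by
    intro t xy
    rw [hτdef]
    dsimp only
    split
    · exact validT_prodT hmX hmY t xy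
    · split
      · exact validT_prodT hmX hmY t xy
      · rename_i hne
        have hdpos : 0 < lam * Lu (t - s₀) xy + (1 - lam) * Lr (t - s₀) xy :=
          lt_of_le_of_ne (hden_nonneg _ _) (Ne.symm hne)
        refine ⟨fun z => ?_, fun x' => ?_, fun y' => ?_⟩
        · refine div_nonneg ?_ hdpos.le
          exact add_nonneg
            (mul_nonneg (mul_nonneg hl0.le (hLu0 _ _)) ((hτu _ _).1 z))
            (mul_nonneg (mul_nonneg (by linarith) (hLr0 _ _)) ((hτr _ _).1 z))
        · rw [← Finset.sum_div, Finset.sum_add_distrib, ← Finset.mul_sum, ← Finset.mul_sum,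
            (hτu _ _).2.1 x', (hτr _ _).2.1 x']
          field_simp
        · rw [← Finset.sum_div, Finset.sum_add_distrib, ← Finset.mul_sum, ← Finset.mul_sum,
            (hτu _ _).2.2 y', (hτr _ _).2.2 y']
          field_simp
  refine ⟨τ, hτvalid, ?_⟩
  intro j
  induction j with
  | zero =>
    have hagree : ∀ s, s < s₀ → τ s = prodT mX mY s := by
      intro s hs
      rw [hτdef]
      simp [hs]
    rw [Nat.add_zero, lawAux_congr s₀ hagree, hbase]
    rfl
  | succ j ihj =>
    show lawAux w τ ((s₀ + j) + 1) = _
    funext z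
    dsimp [lawAux]
    rw [ihj]
    have hkey : ∀ xy, τ (s₀ + j) xy z * (lam * Lu j xy + (1 - lam) * Lr j xy)
        = lam * (τu j xy z * Lu j xy) + (1 - lam) * (τr j xy z * Lr j xy) := by
      intro xy
      have hnlt : ¬ (s₀ + j < s₀) := by omega
      have hsub : s₀ + j - s₀ = j := by omega
      rw [hτdef]
      dsimp only
      rw [if_neg hnlt, hsub]
      by_cases hd : lam * Lu j xy + (1 - lam) * Lr j xy = 0
      · rw [if_pos hd, hd, mul_zero]
        have h1 : Lu j xy = 0 := by nlinarith [hLu0 j xy, hLr0 j xy]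
        have h2 : Lr j xy = 0 := by nlinarith [hLu0 j xy, hLr0 j xy]
        rw [h1, h2]
        ring
      · rw [if_neg hd]
        field_simp
    calc ∑ xy, τ (s₀ + j) xy z * (lam * Lu j xy + (1 - lam) * Lr j xy)
        = ∑ xy, (lam * (τu j xy z * Lu j xy) + (1 - lam) * (τr j xy z * Lr j xy)) :=
          Finset.sum_congr rfl fun xy _ => hkey xy
    _ = lam * ∑ xy, τu j xy z * Lu j xy + (1 - lam) * ∑ xy, τr j xy z * Lr j xy := by
          rw [Finset.sum_add_distrib, Finset.mul_sum, Finset.mul_sum]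
    _ = lam * lawAux u τu (j + 1) z + (1 - lam) * lawAux r τr (j + 1) z := rfl

end PartE
section PartF
set_option linter.unusedSectionVars false
variable {X : Type*} [Fintype X] [DecidableEq X]

lemma mainQ {mX mY : X → X → ℝ} (hmX : ∀ x, IsProb (mX x)) (hmY : ∀ x, IsProb (mY x))
    {C : X × X → ℝ} (hC : ∀ z, 0 ≤ C z)
    {s₀ : ℕ} {lam : ℝ} (hl0 : 0 < lam) (hl1 : lam < 1)
    (hdom : ∀ w : X × X → ℝ, (∀ z, 0 ≤ w z) → (∑ z, w z) = 1 →
      ∀ z, lam ≤ lawAux w (prodT mX mY) s₀ z)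
    {K : ℕ} {A : ℝ} (hA0 : 0 ≤ A)
    (hrest : ∀ d, d ≤ K → ∀ η, 0 < η → ∃ u τu, (∀ z, 0 ≤ u z) ∧ (∑ z, u z) = 1 ∧
      ValidT mX mY τu ∧ ∑ z, C z * lawAux u τu d z < A + η) :
    ∀ n d (w : X × X → ℝ), d ≤ K → n * s₀ ≤ d → (∀ z, 0 ≤ w z) → (∑ z, w z) = 1 →
      ∀ η, 0 < η → ∃ τ, ValidT mX mY τ ∧
        ∑ z, C z * lawAux w τ d z < A + (1 - lam) ^ n * (∑ z, C z) + η := by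
  intro n
  induction n with
  | zero =>
    intro d w hdK _ hw0 hw1 η hη
    refine ⟨prodT mX mY, validT_prodT hmX hmY, ?_⟩
    have hval : ∑ z, C z * lawAux w (prodT mX mY) d z ≤ ∑ z, C z := by
      have htot : ∑ z, lawAux w (prodT mX mY) d z = 1 := by
        rw [lawAux_total (validT_total hmX (validT_prodT hmX hmY)) d, hw1]
      have hlaw0 := lawAux_nonneg hw0 (validT_nonneg (validT_prodT hmX hmY)) (w := w)
      refine Finset.sum_le_sum fun z _ => ?_
      have hle1 : lawAux w (prodT mX mY) d z ≤ 1 := by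
        rw [← htot]
        exact Finset.single_le_sum (fun z' _ => hlaw0 d z') (Finset.mem_univ z)
      calc C z * lawAux w (prodT mX mY) d z ≤ C z * 1 :=
            mul_le_mul_of_nonneg_left hle1 (hC z)
      _ = C z := mul_one _
    have : (1 - lam) ^ 0 * (∑ z, C z) = ∑ z, C z := by rw [pow_zero, one_mul]
    rw [this]
    linarith
  | succ n ih =>
    intro d w hdK hns hw0 hw1 η hη
    have hmul : (n+1) * s₀ = n * s₀ + s₀ := by ring
    have hs₀d : s₀ ≤ d := by omega
    set d' := d - s₀ with hd'
    have hd'K : d' ≤ K := by omega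
    have hnd' : n * s₀ ≤ d' := by omega
    obtain ⟨u, τu, hu0, hu1, hτu, hvalu⟩ := hrest d' hd'K (η/3) (by linarith)
    set Φ := lawAux w (prodT mX mY) s₀ with hΦ
    have hΦ0 : ∀ z, 0 ≤ Φ z := lawAux_nonneg hw0 (validT_nonneg (validT_prodT hmX hmY)) s₀
    have hΦ1 : ∑ z, Φ z = 1 := by
      rw [hΦ, lawAux_total (validT_total hmX (validT_prodT hmX hmY)) s₀, hw1]
    have hΦdom : ∀ z, lam ≤ Φ z := hdom w hw0 hw1
    set r : X × X → ℝ := fun z => (Φ z - lam * u z) / (1 - lam) with hrdef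
    have hul1 : ∀ z, u z ≤ 1 := by
      intro z
      rw [← hu1]
      exact Finset.single_le_sum (fun z' _ => hu0 z') (Finset.mem_univ z)
    have hr0 : ∀ z, 0 ≤ r z := by
      intro z
      refine div_nonneg ?_ (by linarith)
      have : lam * u z ≤ lam * 1 := mul_le_mul_of_nonneg_left (hul1 z) hl0.le
      have := hΦdom z
      linarith
    have h1l : (1:ℝ) - lam ≠ 0 := by linarith
    have hr1 : ∑ z, r z = 1 := by
      rw [hrdef]
      rw [← Finset.sum_div]
      rw [Finset.sum_sub_distrib, ← Finset.mul_sum, hu1, hΦ1, mul_one, div_self h1l]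
    obtain ⟨τr, hτr, hvalr⟩ := ih d' r hd'K hnd' hr0 hr1 (η/3) (by linarith)
    have hbase : lawAux w (prodT mX mY) s₀ = fun z => lam * u z + (1 - lam) * r z := by
      funext z
      rw [hrdef]
      dsimp only
      rw [← hΦ]
      field_simp
      ring
    obtain ⟨τ, hτ, hlaw⟩ := mix_exists hmX hmY hl0 hl1 s₀ w u r hu0 hr0 τu τr hτu hτr hbase
    refine ⟨τ, hτ, ?_⟩
    have hsd : s₀ + d' = d := by omega
    have hval : ∑ z, C z * lawAux w τ d z
        = lam * (∑ z, C z * lawAux u τu d' z) + (1 - lam) * (∑ z, C z * lawAux r τr d' z) := by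
      rw [← hsd, hlaw d']
      rw [Finset.mul_sum, Finset.mul_sum, ← Finset.sum_add_distrib]
      refine Finset.sum_congr rfl fun z _ => ?_
      ring
    rw [hval]
    have h1 : lam * (∑ z, C z * lawAux u τu d' z) < lam * (A + η/3) :=
      mul_lt_mul_of_pos_left hvalu hl0
    have h2 : (1 - lam) * (∑ z, C z * lawAux r τr d' z)
        < (1 - lam) * (A + (1 - lam) ^ n * (∑ z, C z) + η/3) :=
      mul_lt_mul_of_pos_left hvalr (by linarith)
    have hEq : lam * (A + η/3) + (1 - lam) * (A + (1 - lam) ^ n * (∑ z, C z) + η/3)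
        = A + (1 - lam) ^ (n+1) * (∑ z, C z) + η/3 := by
      ring
    have hη3 : η/3 < η := by linarith
    linarith

end PartF
section PartG
set_option linter.unusedSectionVars false
variable {X : Type*} [Fintype X] [DecidableEq X]

lemma dWL_compare {mX mY : X → X → ℝ} (hmX : ∀ x, IsProb (mX x)) (hmY : ∀ x, IsProb (mY x))
    {C : X × X → ℝ} (hC : ∀ z, 0 ≤ C z)
    {s₀ : ℕ} {lam : ℝ} (hl0 : 0 < lam) (hl1 : lam < 1)
    (hdom : ∀ w : X × X → ℝ, (∀ z, 0 ≤ w z) → (∑ z, w z) = 1 →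
      ∀ z, lam ≤ lawAux w (prodT mX mY) s₀ z)
    {p q p' q' : X → ℝ} (hp : IsProb p) (hq : IsProb q) (hp' : IsProb p') (hq' : IsProb q')
    (K : ℕ) :
    dWL K (⟨mX, p', hmX, hp'⟩ : MarkovChain X) (⟨mY, q', hmY, hq'⟩ : MarkovChain X) C
      ≤ dWL K (⟨mX, p, hmX, hp⟩ : MarkovChain X) (⟨mY, q, hmY, hq⟩ : MarkovChain X) C
        + (1 - lam) ^ (K / s₀) * (∑ z, C z) := by
  classical
  set A := dWL K (⟨mX, p, hmX, hp⟩ : MarkovChain X) (⟨mY, q, hmY, hq⟩ : MarkovChain X) C with hA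
  have hA0 : 0 ≤ A := dWL_nonneg hC K
  have hrest : ∀ d, d ≤ K → ∀ η, 0 < η → ∃ u τu, (∀ z, 0 ≤ u z) ∧ (∑ z, u z) = 1 ∧
      ValidT mX mY τu ∧ ∑ z, C z * lawAux u τu d z < A + η := by
    intro d hdK η hη
    have hres := dWL_restriction hmX hmY hC hp hq
      (stepD_iter_prob hmX hp (K - d)) (stepD_iter_prob hmY hq (K - d))
      (K - d) d rfl rfl
    rw [show K - d + d = K from by omega] at hres
    have hlt : dWL d (⟨mX, (stepD mX)^[K-d] p, hmX, stepD_iter_prob hmX hp (K - d)⟩ : MarkovChain X)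
        (⟨mY, (stepD mY)^[K-d] q, hmY, stepD_iter_prob hmY hq (K - d)⟩ : MarkovChain X) C
        < A + η := lt_of_le_of_lt hres (by rw [← hA]; linarith)
    rw [dWL_eq_iInf] at hlt
    obtain ⟨π, hπ⟩ := exists_lt_of_ciInf_lt hlt
    refine ⟨π.init, π.trans, π.init_coupling.1, ?_, π.trans_coupling, hπ⟩
    exact coupling_total π.init_coupling (stepD_iter_prob hmX hp (K - d)).2
  have hfin : ∀ η, 0 < η →
      dWL K (⟨mX, p', hmX, hp'⟩ : MarkovChain X) (⟨mY, q', hmY, hq'⟩ : MarkovChain X) C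
        ≤ A + (1 - lam) ^ (K / s₀) * (∑ z, C z) + η := by
    intro η hη
    set w : X × X → ℝ := fun z => p' z.1 * q' z.2 with hw
    have hw0 : ∀ z, 0 ≤ w z := fun z => mul_nonneg (hp'.1 z.1) (hq'.1 z.2)
    have hw1 : ∑ z, w z = 1 := coupling_total (prod_coupling hp' hq') hp'.2
    obtain ⟨τ, hτ, hval⟩ := mainQ hmX hmY hC hl0 hl1 hdom hA0 hrest (K / s₀) K w
      le_rfl (Nat.div_mul_le_self K s₀) hw0 hw1 η hη
    have hle : dWL K (⟨mX, p', hmX, hp'⟩ : MarkovChain X)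
        (⟨mY, q', hmY, hq'⟩ : MarkovChain X) C ≤ ∑ z, C z * lawAux w τ K z := by
      rw [dWL_eq_iInf]
      exact ciInf_le (dWL_bddBelow hC K) (mkMC w τ (prod_coupling hp' hq') hτ)
    linarith
  exact le_of_forall_pos_le_add hfin

end PartG
/-- For irreducible aperiodic kernels with pseudometric cost, the limit of the
depth-`k` WL distances exists and does not depend on the initial distributions;
in particular it equals the limit for the stationary initial distributions. -/
theorem stmt16 {X : Type*} [Fintype X] [DecidableEq X]
    (dX : X → X → ℝ) (hdX : IsPseudometric dX)
    (mX mY : X → X → ℝ)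
    (hmX : ∀ x, IsProb (mX x)) (hmY : ∀ x, IsProb (mY x))
    (hirrX : KernelIrreducible mX) (haperX : KernelAperiodic mX)
    (hirrY : KernelIrreducible mY) (haperY : KernelAperiodic mY)
    (μX μY : X → ℝ) (hμX : IsProb μX) (hμY : IsProb μY)
    (hstatX : IsStationaryFor mX μX) (hstatY : IsStationaryFor mY μY)
    (huniqX : ∀ μ, IsProb μ → IsStationaryFor mX μ → μ = μX)
    (huniqY : ∀ μ, IsProb μ → IsStationaryFor mY μ → μ = μY) :
    ∃ c : ℝ,
      (∀ (νX νY : X → ℝ) (hνX : IsProb νX) (hνY : IsProb νY),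
        Tendsto (fun k =>
            dWL k (⟨mX, νX, hmX, hνX⟩ : MarkovChain X)
              (⟨mY, νY, hmY, hνY⟩ : MarkovChain X)
              (fun z : X × X => dX z.1 z.2)) atTop (𝓝 c)) ∧
      Tendsto (fun k =>
          dWL k (⟨mX, μX, hmX, hμX⟩ : MarkovChain X)
            (⟨mY, μY, hmY, hμY⟩ : MarkovChain X)
            (fun z : X × X => dX z.1 z.2)) atTop (𝓝 c) := by
  classical
  have hne : Nonempty X := by
    rcases isEmpty_or_nonempty X with hE | hne
    · exfalso
      have h := hμX.2
      rw [Finset.univ_eq_empty, Finset.sum_empty] at h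
      norm_num at h
    · exact hne
  set C : X × X → ℝ := fun z => dX z.1 z.2 with hCdef
  have hC0 : ∀ z, 0 ≤ C z := fun z => hdX.1 _ _
  set D : ℝ := ∑ z : X × X, C z with hDdef
  obtain ⟨sX, hsX1, hsXpos⟩ := exists_uniform_pos hmX hirrX haperX
  obtain ⟨sY, hsY1, hsYpos⟩ := exists_uniform_pos hmY hirrY haperY
  set s₀ := max sX sY with hs₀def
  have hs₀1 : 1 ≤ s₀ := le_trans hsX1 (le_max_left _ _)
  have hXpos : ∀ x x', 0 < kpow mX s₀ x x' := kpow_pos_mono hmX (le_max_left _ _) hsXpos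
  have hYpos : ∀ x x', 0 < kpow mY s₀ x x' := kpow_pos_mono hmY (le_max_right _ _) hsYpos
  haveI : Nonempty (X × X) := ⟨(Classical.arbitrary X, Classical.arbitrary X)⟩
  set α : ℝ := min
    (Finset.univ.inf' Finset.univ_nonempty (fun z : X × X => kpow mX s₀ z.1 z.2))
    (Finset.univ.inf' Finset.univ_nonempty (fun z : X × X => kpow mY s₀ z.1 z.2)) with hαdef
  have hα0 : 0 < α := by
    refine lt_min ?_ ?_
    · rw [Finset.lt_inf'_iff]
      exact fun z _ => hXpos z.1 z.2
    · rw [Finset.lt_inf'_iff]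
      exact fun z _ => hYpos z.1 z.2
  have hαX : ∀ x x', α ≤ kpow mX s₀ x x' := fun x x' =>
    le_trans (min_le_left _ _) (Finset.inf'_le _ (Finset.mem_univ (x, x')))
  have hαY : ∀ x x', α ≤ kpow mY s₀ x x' := fun x x' =>
    le_trans (min_le_right _ _) (Finset.inf'_le _ (Finset.mem_univ (x, x')))
  have hα1 : α ≤ 1 := by
    obtain ⟨x0⟩ := hne
    calc α ≤ kpow mX s₀ x0 x0 := hαX x0 x0
    _ ≤ ∑ x', kpow mX s₀ x0 x' := Finset.single_le_sum
        (fun x' _ => kpow_nonneg hmX s₀ x0 x') (Finset.mem_univ x0)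
    _ = 1 := kpow_rowsum hmX s₀ x0
  set lam : ℝ := α * α / 2 with hlamdef
  have hl0 : 0 < lam := by positivity
  have hl1 : lam < 1 := by nlinarith
  have hdom : ∀ w : X × X → ℝ, (∀ z, 0 ≤ w z) → (∑ z, w z) = 1 →
      ∀ z, lam ≤ lawAux w (prodT mX mY) s₀ z := by
    intro w hw0 hw1 z
    rw [lawAux_prod_formula (mX := mX) (mY := mY) s₀]
    dsimp only
    have h1 : α * α = ∑ xy : X × X, α * α * w xy := by
      rw [← Finset.mul_sum, hw1, mul_one]
    have h2 : ∑ xy : X × X, α * α * w xy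
        ≤ ∑ xy : X × X, kpow mX s₀ xy.1 z.1 * kpow mY s₀ xy.2 z.2 * w xy := by
      refine Finset.sum_le_sum fun xy _ => ?_
      refine mul_le_mul_of_nonneg_right ?_ (hw0 xy)
      exact mul_le_mul (hαX _ _) (hαY _ _) hα0.le (kpow_nonneg hmX s₀ _ _)
    have h3 : lam ≤ α * α := by nlinarith
    linarith
  -- the stationary sequence
  set g : ℕ → ℝ := fun k =>
    dWL k (⟨mX, μX, hmX, hμX⟩ : MarkovChain X) (⟨mY, μY, hmY, hμY⟩ : MarkovChain X) C with hgdef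
  have hgmono : Monotone g := by
    refine monotone_nat_of_le_succ fun k => ?_
    have hstepX : μX = (stepD mX)^[1] μX := by
      rw [Function.iterate_one]
      exact (funext fun x' => hstatX x').symm
    have hstepY : μY = (stepD mY)^[1] μY := by
      rw [Function.iterate_one]
      exact (funext fun y' => hstatY y').symm
    have := dWL_restriction hmX hmY hC0 hμX hμY hμX hμY 1 k hstepX hstepY
    rw [show 1 + k = k + 1 from by omega] at this
    exact this
  have hgbdd : BddAbove (Set.range g) := by
    refine ⟨D, ?_⟩
    rintro r ⟨k, rfl⟩
    exact dWL_le_D hC0 k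
  set c := ⨆ k, g k with hcdef
  have hgtend : Tendsto g atTop (𝓝 c) := tendsto_atTop_ciSup hgmono hgbdd
  -- error term
  set err : ℕ → ℝ := fun k => (1 - lam) ^ (k / s₀) * D with herrdef
  have herr : Tendsto err atTop (𝓝 0) := by
    have h1 : Tendsto (fun k : ℕ => k / s₀) atTop atTop := by
      refine Filter.tendsto_atTop_atTop.2 fun b => ⟨b * s₀, fun a ha => ?_⟩
      exact (Nat.le_div_iff_mul_le (by omega)).2 ha
    have h2 : Tendsto (fun n : ℕ => (1 - lam) ^ n) atTop (𝓝 0) :=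
      tendsto_pow_atTop_nhds_zero_of_lt_one (by linarith) (by linarith)
    have h3 := (h2.comp h1).mul_const D
    simpa [herrdef, Function.comp] using h3
  have hmain : ∀ (νX νY : X → ℝ) (hνX : IsProb νX) (hνY : IsProb νY),
      Tendsto (fun k =>
        dWL k (⟨mX, νX, hmX, hνX⟩ : MarkovChain X)
          (⟨mY, νY, hmY, hνY⟩ : MarkovChain X) C) atTop (𝓝 c) := by
    intro νX νY hνX hνY
    set a : ℕ → ℝ := fun k =>
      dWL k (⟨mX, νX, hmX, hνX⟩ : MarkovChain X) (⟨mY, νY, hmY, hνY⟩ : MarkovChain X) C with hadef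
    have hub : ∀ k, a k ≤ g k + err k := fun k =>
      dWL_compare hmX hmY hC0 hl0 hl1 hdom hμX hμY hνX hνY k
    have hlb : ∀ k, g k - err k ≤ a k := by
      intro k
      have := dWL_compare hmX hmY hC0 hl0 hl1 hdom hνX hνY hμX hμY k
      have herr0 : (1 - lam) ^ (k / s₀) * (∑ z : X × X, C z) = err k := rfl
      rw [herr0] at this
      linarith
    have hlower : Tendsto (fun k => g k - err k) atTop (𝓝 c) := by
      have := hgtend.sub herr
      simpa using this
    have hupper : Tendsto (fun k => g k + err k) atTop (𝓝 c) := by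
      have := hgtend.add herr
      simpa using this
    exact tendsto_of_tendsto_of_tendsto_of_le_of_le hlower hupper hlb hub
  exact ⟨c, hmain, hmain μX μY hμX hμY⟩
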